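/- (Atiyah) Let X be an object of an abelian category satisfying the bi-chain condition. Then X admits a decomposition into a finite direct sum X ≅ X_1 ⊕ … ⊕ X_n of indecomposable objects, each of which has a local endomorphism ring. -/

import Mathlib

open CategoryTheory CategoryTheory.Limits

attribute [local instance] CategoryTheory.Abelian.hasFiniteBiproducts
attribute [local instance] CategoryTheory.Limits.hasBinaryBiproducts_of_finite_biproducts

universe v u

/-- An object `X` satisfies the *bi-chain condition* if for every bi-chain
`X_n ⟶ X_{n+1} ⟶ X_n` (with the `α n` epimorphisms and the `β n` monomorphisms)
starting at `X₀ = X`, all `α n` and `β n` are isomorphisms for large enough `n`. -/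
def BichainCondition {A : Type u} [Category.{v} A] (X : A) : Prop :=
  ∀ (obj : ℕ → A) (α : ∀ n, obj n ⟶ obj (n + 1)) (β : ∀ n, obj (n + 1) ⟶ obj n),
    obj 0 = X → (∀ n, Epi (α n)) → (∀ n, Mono (β n)) →
    ∃ n₀ : ℕ, ∀ n, n₀ ≤ n → IsIso (α n) ∧ IsIso (β n)



variable {A : Type u} [Category.{v} A] [Abelian A]

lemma isZero_of_isIso_inl {U Z : A} (h : IsIso (biprod.inl : U ⟶ U ⊞ Z)) : IsZero Z := by
  rw [IsZero.iff_id_eq_zero]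
  have h1 : (biprod.inl : U ⟶ U ⊞ Z) ≫ biprod.snd = biprod.inl ≫ (0 : U ⊞ Z ⟶ Z) := by simp
  have h2 : (biprod.snd : U ⊞ Z ⟶ Z) = 0 := by
    haveI := h; exact (cancel_epi _).1 h1
  calc 𝟙 Z = biprod.inr ≫ biprod.snd := by simp
  _ = 0 := by rw [h2]; simp

lemma bichain_of_summand {W U Z : A} (e : W ≅ U ⊞ Z) (hW : BichainCondition W) :
    BichainCondition U := by
  intro obj α β h0 hα hβ
  subst h0
  let obj' : ℕ → A := fun n => match n with | 0 => W | (n+1) => obj (n+1) ⊞ Z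
  let α' : ∀ n, obj' n ⟶ obj' (n+1) := fun n => match n with
    | 0 => e.hom ≫ biprod.map (α 0) (𝟙 Z)
    | (n+1) => biprod.map (α (n+1)) (𝟙 Z)
  let β' : ∀ n, obj' (n+1) ⟶ obj' n := fun n => match n with
    | 0 => biprod.map (β 0) (𝟙 Z) ≫ e.inv
    | (n+1) => biprod.map (β (n+1)) (𝟙 Z)
  have hα' : ∀ n, Epi (α' n) := by
    rintro (_|n)
    · haveI := hα 0; exact epi_comp _ _
    · haveI := hα (n+1); exact inferInstanceAs (Epi (biprod.map (α (n+1)) (𝟙 Z)))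
  have hβ' : ∀ n, Mono (β' n) := by
    rintro (_|n)
    · haveI := hβ 0; exact mono_comp _ _
    · haveI := hβ (n+1); exact inferInstanceAs (Mono (biprod.map (β (n+1)) (𝟙 Z)))
  obtain ⟨n₀, hn₀⟩ := hW obj' α' β' rfl hα' hβ'
  refine ⟨n₀ + 1, fun n hn => ?_⟩
  obtain ⟨m, rfl⟩ : ∃ m, n = m + 1 := ⟨n - 1, by omega⟩
  obtain ⟨h1, h2⟩ := hn₀ (m+1) (by omega)
  constructor
  · haveI : IsIso (biprod.map (α (m+1)) (𝟙 Z)) := h1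
    exact isIso_left_of_isIso_biprod_map (α (m+1)) (𝟙 Z)
  · haveI : IsIso (biprod.map (β (m+1)) (𝟙 Z)) := h2
    exact isIso_left_of_isIso_biprod_map (β (m+1)) (𝟙 Z)

lemma idem_eq_zero_or_id {Y : A} (hY : Indecomposable Y) (π : Y ⟶ Y) (hp : π ≫ π = π) :
    π = 0 ∨ π = 𝟙 Y := by
  have c1 : π ≫ (𝟙 Y - π) = 0 := by
    rw [Preadditive.comp_sub, hp]; simp
  have c2 : (𝟙 Y - π) ≫ π = 0 := by
    rw [Preadditive.sub_comp, hp]; simp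
  let r₁ : Y ⟶ kernel (𝟙 Y - π) := kernel.lift _ π c1
  let r₂ : Y ⟶ kernel π := kernel.lift _ (𝟙 Y - π) c2
  have hi1 : kernel.ι (𝟙 Y - π) ≫ π = kernel.ι (𝟙 Y - π) := by
    have k1 := kernel.condition (𝟙 Y - π)
    rw [Preadditive.comp_sub, sub_eq_zero] at k1
    simpa using k1.symm
  have hi2 : kernel.ι π ≫ π = 0 := kernel.condition _
  let b : BinaryBicone (kernel (𝟙 Y - π)) (kernel π) :=
    { pt := Y
      fst := r₁
      snd := r₂
      inl := kernel.ι _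
      inr := kernel.ι _
      inl_fst := by
        rw [← cancel_mono (kernel.ι (𝟙 Y - π))]
        simp [r₁, hi1]
      inl_snd := by
        rw [← cancel_mono (kernel.ι π)]
        have := kernel.condition (𝟙 Y - π)
        simp [r₂, this]
      inr_fst := by
        rw [← cancel_mono (kernel.ι (𝟙 Y - π))]
        simp [r₁, hi2]
      inr_snd := by
        rw [← cancel_mono (kernel.ι π)]
        simp [r₂, Preadditive.comp_sub, hi2] }
  have total : b.fst ≫ b.inl + b.snd ≫ b.inr = 𝟙 Y := by
    simp only [b, r₁, r₂, kernel.lift_ι]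
    abel
  have hb : b.IsBilimit := isBinaryBilimitOfTotal b total
  have e : Y ≅ kernel (𝟙 Y - π) ⊞ kernel π := biprod.uniqueUpToIso _ _ hb
  rcases hY.2 _ _ e with hz | hz
  · left
    have h' : r₁ ≫ kernel.ι (𝟙 Y - π) = π := kernel.lift_ι _ _ _
    rw [hz.eq_zero_of_tgt r₁, zero_comp] at h'
    exact h'.symm
  · right
    have h' : r₂ ≫ kernel.ι π = 𝟙 Y - π := kernel.lift_ι _ _ _
    rw [hz.eq_zero_of_tgt r₂, zero_comp] at h'
    exact (sub_eq_zero.mp h'.symm).symm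

namespace KRSAux
variable {A : Type u} [Category.{v} A] [Abelian A] {Y : A} (f : End Y)

omit [Abelian A] in
lemma fp_succ (n : ℕ) : f ^ (n+1) = (f ^ n : End Y) ≫ f := by rw [pow_succ', End.mul_def]

omit [Abelian A] in
lemma fp_succ' (n : ℕ) : f ^ (n+1) = f ≫ (f ^ n : End Y) := by rw [pow_succ, End.mul_def]

/-- Objects of the Fitting bi-chain: `Y, im f, im f², ...`. -/
noncomputable def obj : ℕ → A
  | 0 => Y
  | (n+1) => image (f ^ (n+1) : End Y)

/-- Inclusion of `obj n` into `Y`. -/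
noncomputable def ι : ∀ n, obj f n ⟶ Y
  | 0 => 𝟙 Y
  | (_+1) => image.ι _

/-- Projection of `Y` onto `obj n`. -/
noncomputable def p : ∀ n, Y ⟶ obj f n
  | 0 => 𝟙 Y
  | (_+1) => factorThruImage _

instance mono_ι : ∀ n, Mono (ι f n)
  | 0 => inferInstanceAs (Mono (𝟙 Y))
  | (_+1) => inferInstanceAs (Mono (image.ι _))

instance epi_p : ∀ n, Epi (p f n)
  | 0 => inferInstanceAs (Epi (𝟙 Y))
  | (_+1) => inferInstanceAs (Epi (factorThruImage _))

lemma p_ι (n : ℕ) : p f n ≫ ι f n = f ^ n := by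
  cases n with
  | zero => simp [p, ι, End.one_def]; exact Category.comp_id _
  | succ n => simp [p, ι]; exact image.fac _

lemma comp_eq (n : ℕ) :
    factorThruImage (f ^ (n+1) : End Y) ≫ (image.ι (f ^ (n+1) : End Y) ≫ f) = f ^ (n+2) := by
  rw [← Category.assoc, image.fac, ← fp_succ]

/-- The epi maps of the Fitting bi-chain. -/
noncomputable def α : ∀ n, obj f n ⟶ obj f (n+1)
  | 0 => factorThruImage (f ^ (0+1) : End Y)
  | (n+1) =>
    letI : IsIso (image.preComp (factorThruImage (f ^ (n+1) : End Y))
        (image.ι (f ^ (n+1) : End Y) ≫ f)) := isIso_of_mono_of_epi _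
    factorThruImage (image.ι (f ^ (n+1) : End Y) ≫ f) ≫
      inv (image.preComp (factorThruImage (f ^ (n+1) : End Y))
        (image.ι (f ^ (n+1) : End Y) ≫ f)) ≫
      image.eqToHom (comp_eq f n)

/-- The mono maps of the Fitting bi-chain. -/
noncomputable def β : ∀ n, obj f (n+1) ⟶ obj f n
  | 0 => image.ι _
  | (n+1) => image.eqToHom (fp_succ' f (n+1)) ≫ image.preComp f (f ^ (n+1) : End Y)

lemma eqToHom_ι {X' Y' : A} {g g' : X' ⟶ Y'} (h : g = g') :
    image.eqToHom h ≫ image.ι g' = image.ι g := image.lift_fac _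

instance epi_α : ∀ n, Epi (α f n)
  | 0 => inferInstanceAs (Epi (factorThruImage (f ^ (0+1) : End Y)))
  | (n+1) => by
    letI : IsIso (image.preComp (factorThruImage (f ^ (n+1) : End Y))
        (image.ι (f ^ (n+1) : End Y) ≫ f)) := isIso_of_mono_of_epi _
    show Epi (factorThruImage (image.ι (f ^ (n+1) : End Y) ≫ f) ≫ inv (image.preComp
      (factorThruImage (f ^ (n+1) : End Y)) (image.ι (f ^ (n+1) : End Y) ≫ f)) ≫
      image.eqToHom (comp_eq f n))
    infer_instance

instance mono_β : ∀ n, Mono (β f n)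
  | 0 => inferInstanceAs (Mono (image.ι (f ^ (0+1) : End Y)))
  | (n+1) => by
    show Mono (image.eqToHom _ ≫ image.preComp f _)
    infer_instance

lemma α_ι (n : ℕ) : α f n ≫ ι f (n+1) = ι f n ≫ f := by
  cases n with
  | zero =>
    show factorThruImage (f ^ (0+1) : End Y) ≫ image.ι _ = 𝟙 Y ≫ f
    rw [image.fac, pow_one, Category.id_comp]
  | succ n =>
    letI : IsIso (image.preComp (factorThruImage (f ^ (n+1) : End Y))
        (image.ι (f ^ (n+1) : End Y) ≫ f)) := isIso_of_mono_of_epi _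
    show (factorThruImage _ ≫ inv _ ≫ image.eqToHom _) ≫ image.ι _ = image.ι _ ≫ f
    rw [Category.assoc, Category.assoc, eqToHom_ι, ← image.preComp_ι, IsIso.inv_hom_id_assoc,
      image.fac]

lemma β_ι (n : ℕ) : β f n ≫ ι f n = ι f (n+1) := by
  cases n with
  | zero =>
    show image.ι _ ≫ 𝟙 Y = image.ι _
    rw [Category.comp_id]
  | succ n =>
    show (image.eqToHom _ ≫ image.preComp f _) ≫ image.ι _ = image.ι _
    rw [Category.assoc, image.preComp_ι, eqToHom_ι]

/-- Composite of `α`'s. -/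
noncomputable def Achain (N : ℕ) : ∀ k, obj f N ⟶ obj f (N + k)
  | 0 => 𝟙 _
  | (k+1) => Achain N k ≫ α f (N + k)

/-- Composite of `β`'s. -/
noncomputable def Bchain (N : ℕ) : ∀ k, obj f (N + k) ⟶ obj f N
  | 0 => 𝟙 _
  | (k+1) => β f (N + k) ≫ Bchain N k

lemma Achain_ι (N : ℕ) : ∀ k, Achain f N k ≫ ι f (N + k) = ι f N ≫ f ^ k
  | 0 => by simp [Achain, End.one_def]
  | (k+1) => by
    rw [Achain, Category.assoc]
    show Achain f N k ≫ α f (N + k) ≫ ι f (N + k + 1) = ι f N ≫ f ^ (k + 1)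
    rw [α_ι, ← Category.assoc, Achain_ι N k, Category.assoc, ← fp_succ]

lemma Bchain_ι (N : ℕ) : ∀ k, Bchain f N k ≫ ι f N = ι f (N + k)
  | 0 => by simp [Bchain]
  | (k+1) => by
    rw [Bchain, Category.assoc]
    show β f (N + k) ≫ Bchain f N k ≫ ι f N = ι f (N + k + 1)
    rw [Bchain_ι N k, β_ι]

lemma isIso_Achain (N : ℕ) (h : ∀ n, N ≤ n → IsIso (α f n)) : ∀ k, IsIso (Achain f N k)
  | 0 => inferInstanceAs (IsIso (𝟙 _))
  | (k+1) => by
    haveI := isIso_Achain N h k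
    haveI := h (N + k) (Nat.le_add_right _ _)
    rw [Achain]; infer_instance

lemma isIso_Bchain (N : ℕ) (h : ∀ n, N ≤ n → IsIso (β f n)) : ∀ k, IsIso (Bchain f N k)
  | 0 => inferInstanceAs (IsIso (𝟙 _))
  | (k+1) => by
    haveI := isIso_Bchain N h k
    haveI := h (N + k) (Nat.le_add_right _ _)
    rw [Bchain]; infer_instance

end KRSAux

lemma isLocalRing_end {Y : A} (hY : Indecomposable Y) (h : BichainCondition Y) :
    IsLocalRing (End Y) := by
  haveI : Nontrivial (End Y) := by
    refine ⟨1, 0, fun hc => hY.1 ?_⟩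
    rw [IsZero.iff_id_eq_zero]
    exact hc
  refine ⟨fun {a b} hab => ?_⟩
  by_cases hf : IsUnit a
  · left; exact hf
  right
  have hba : b = 1 - a := by rw [← hab]; abel
  rw [hba]
  set f := a with hfa
  suffices hn : IsNilpotent f by exact hn.isUnit_one_sub
  obtain ⟨N, hch⟩ := h (KRSAux.obj f) (KRSAux.α f) (KRSAux.β f) rfl
    (fun n => inferInstance) (fun n => inferInstance)
  haveI hA : IsIso (KRSAux.Achain f N N) := KRSAux.isIso_Achain f N (fun n hn => (hch n hn).1) N
  haveI hB : IsIso (KRSAux.Bchain f N N) := KRSAux.isIso_Bchain f N (fun n hn => (hch n hn).2) N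
  have hu : KRSAux.ι f N ≫ KRSAux.p f N = KRSAux.Achain f N N ≫ KRSAux.Bchain f N N := by
    rw [← cancel_mono (KRSAux.ι f N)]
    simp only [Category.assoc, KRSAux.p_ι, KRSAux.Bchain_ι, KRSAux.Achain_ι]
  haveI hiu : IsIso (KRSAux.ι f N ≫ KRSAux.p f N) := by rw [hu]; infer_instance
  have h1 : KRSAux.ι f N ≫ KRSAux.p f N ≫ inv (KRSAux.ι f N ≫ KRSAux.p f N) ≫ KRSAux.ι f N
      = KRSAux.ι f N := by
    simp only [← Category.assoc, IsIso.hom_inv_id, Category.id_comp]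
  have hidem : (KRSAux.p f N ≫ inv (KRSAux.ι f N ≫ KRSAux.p f N) ≫ KRSAux.ι f N) ≫
      (KRSAux.p f N ≫ inv (KRSAux.ι f N ≫ KRSAux.p f N) ≫ KRSAux.ι f N) =
      KRSAux.p f N ≫ inv (KRSAux.ι f N ≫ KRSAux.p f N) ≫ KRSAux.ι f N := by
    simp only [Category.assoc, h1]
  rcases idem_eq_zero_or_id hY _ hidem with h0 | h1'
  · -- π = 0 : f is nilpotent
    have hz : inv (KRSAux.ι f N ≫ KRSAux.p f N) ≫ KRSAux.ι f N = 0 := by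
      rw [← cancel_epi (KRSAux.p f N), comp_zero]
      exact h0
    have hι : KRSAux.ι f N = 0 := by
      rw [← IsIso.hom_inv_id_assoc (KRSAux.ι f N ≫ KRSAux.p f N) (KRSAux.ι f N), hz, comp_zero]
    exact ⟨N, by rw [← KRSAux.p_ι, hι, comp_zero]⟩
  · -- π = 𝟙 : f is iso, contradiction
    exfalso
    haveI : Epi ((KRSAux.p f N ≫ inv (KRSAux.ι f N ≫ KRSAux.p f N)) ≫ KRSAux.ι f N) := by
      rw [Category.assoc, h1']
      infer_instance
    haveI : Epi (KRSAux.ι f N) :=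
      epi_of_epi (KRSAux.p f N ≫ inv (KRSAux.ι f N ≫ KRSAux.p f N)) (KRSAux.ι f N)
    haveI : IsIso (KRSAux.ι f N) := isIso_of_mono_of_epi _
    haveI : IsIso (KRSAux.β f N) := (hch N le_rfl).2
    haveI : IsIso (KRSAux.ι f (N+1)) := by
      rw [← KRSAux.β_ι]; infer_instance
    haveI : IsIso (KRSAux.α f N) := (hch N le_rfl).1
    have hfe : f = inv (KRSAux.ι f N) ≫ KRSAux.α f N ≫ KRSAux.ι f (N+1) := by
      rw [KRSAux.α_ι, IsIso.inv_hom_id_assoc]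
    have : IsIso f := by rw [hfe]; infer_instance
    exact hf ((isUnit_iff_isIso f).2 this)

/-- The biproduct over a sum of two finite index types is the binary biproduct of
the two biproducts. -/
noncomputable def sumBiprodIso {n m : ℕ} (f₁ : Fin n → A) (f₂ : Fin m → A) :
    ((⨁ f₁) ⊞ (⨁ f₂) : A) ≅ ⨁ (Sum.elim f₁ f₂) where
  hom := biproduct.lift fun j => match j with
    | .inl i => biprod.fst ≫ biproduct.π f₁ i
    | .inr i => biprod.snd ≫ biproduct.π f₂ i
  inv := biprod.lift (biproduct.lift fun i => biproduct.π (Sum.elim f₁ f₂) (Sum.inl i))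
      (biproduct.lift fun i => biproduct.π (Sum.elim f₁ f₂) (Sum.inr i))
  hom_inv_id := by
    apply biprod.hom_ext
    · simp only [Category.assoc, biprod.lift_fst, Category.id_comp]
      apply biproduct.hom_ext; intro i
      exact (Category.assoc _ _ _).trans ((congrArg (_ ≫ ·) (biproduct.lift_π _ i)).trans
        (biproduct.lift_π _ (Sum.inl i)))
    · simp only [Category.assoc, biprod.lift_snd, Category.id_comp]
      apply biproduct.hom_ext; intro i
      exact (Category.assoc _ _ _).trans ((congrArg (_ ≫ ·) (biproduct.lift_π _ i)).trans
        (biproduct.lift_π _ (Sum.inr i)))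
  inv_hom_id := by
    apply biproduct.hom_ext; intro j
    rcases j with i | i
    · exact (Category.assoc _ _ _).trans (((congrArg (_ ≫ ·) (biproduct.lift_π _ (Sum.inl i))).trans
        ((biprod.lift_fst_assoc _ _ _).trans (biproduct.lift_π _ i))).trans (Category.id_comp _).symm)
    · exact (Category.assoc _ _ _).trans (((congrArg (_ ≫ ·) (biproduct.lift_π _ (Sum.inr i))).trans
        ((biprod.lift_snd_assoc _ _ _).trans (biproduct.lift_π _ i))).trans (Category.id_comp _).symm)


/-- An object decomposes into a finite biproduct of indecomposables satisfying the
bi-chain condition. -/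
def GoodDecomp (W : A) : Prop :=
  ∃ (n : ℕ) (f : Fin n → A), Nonempty (W ≅ ⨁ f) ∧
    ∀ i, Indecomposable (f i) ∧ BichainCondition (f i)

lemma goodDecomp_of_isZero {W : A} (hW : IsZero W) : GoodDecomp W := by
  refine ⟨0, Fin.elim0, ⟨hW.iso ?_⟩, fun i => i.elim0⟩
  rw [IsZero.iff_id_eq_zero]
  apply biproduct.hom_ext
  intro j; exact j.elim0

lemma goodDecomp_of_indecomposable {W : A} (h1 : Indecomposable W) (h2 : BichainCondition W) :
    GoodDecomp W := by
  refine ⟨1, fun _ => W, ⟨?_⟩, fun _ => ⟨h1, h2⟩⟩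
  refine ⟨biproduct.lift fun _ => 𝟙 W, biproduct.π _ 0, by simp, ?_⟩
  apply biproduct.hom_ext; intro j
  obtain rfl : j = 0 := Subsingleton.elim _ _
  simp

lemma goodDecomp_of_biprod {W U Z : A} (e : W ≅ U ⊞ Z) (hU : GoodDecomp U)
    (hZ : GoodDecomp Z) : GoodDecomp W := by
  obtain ⟨n, f₁, ⟨e₁⟩, h₁⟩ := hU
  obtain ⟨m, f₂, ⟨e₂⟩, h₂⟩ := hZ
  have hall : ∀ x : Fin n ⊕ Fin m,
      Indecomposable (Sum.elim f₁ f₂ x) ∧ BichainCondition (Sum.elim f₁ f₂ x) := by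
    rintro (x | x)
    · exact h₁ x
    · exact h₂ x
  refine ⟨n + m, Sum.elim f₁ f₂ ∘ finSumFinEquiv.symm, ⟨?_⟩,
    fun i => hall (finSumFinEquiv.symm i)⟩
  exact e ≪≫ biprod.mapIso e₁ e₂ ≪≫ sumBiprodIso f₁ f₂ ≪≫
    biproduct.whiskerEquiv finSumFinEquiv (fun j => eqToIso (by simp))

lemma key_step {W : A} (hb : BichainCondition W) (hg : ¬ GoodDecomp W) :
    ∃ (U Z : A), Nonempty (W ≅ U ⊞ Z) ∧ ¬ IsZero Z ∧ BichainCondition U ∧ ¬ GoodDecomp U := by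
  have hnz : ¬ IsZero W := fun hz => hg (goodDecomp_of_isZero hz)
  have hni : ¬ Indecomposable W := fun hi => hg (goodDecomp_of_indecomposable hi hb)
  have hsplit : ∃ (U Z : A) (_ : W ≅ U ⊞ Z), ¬ IsZero U ∧ ¬ IsZero Z := by
    by_contra hcon
    push_neg at hcon
    refine hni ⟨hnz, fun U Z e => ?_⟩
    by_contra hor
    push_neg at hor
    exact hor.2 (hcon U Z e hor.1)
  obtain ⟨U, Z, e, hU, hZ⟩ := hsplit
  by_cases hgu : GoodDecomp U
  · refine ⟨Z, U, ⟨e ≪≫ biprod.braiding U Z⟩, hU, bichain_of_summand (e ≪≫ biprod.braiding U Z) hb, ?_⟩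
    intro hgz
    exact hg (goodDecomp_of_biprod e hgu hgz)
  · exact ⟨U, Z, ⟨e⟩, hZ, bichain_of_summand e hb, hgu⟩

theorem goodDecomp_of_bichain (X : A) (h : BichainCondition X) : GoodDecomp X := by
  by_contra hX
  have key' : ∀ t : {W : A // BichainCondition W ∧ ¬ GoodDecomp W},
      ∃ (U : {W : A // BichainCondition W ∧ ¬ GoodDecomp W}) (Z : A),
        Nonempty (t.1 ≅ U.1 ⊞ Z) ∧ ¬ IsZero Z := by
    rintro ⟨W, hb, hg⟩
    obtain ⟨U, Z, hne, hz, hb', hg'⟩ := key_step hb hg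
    exact ⟨⟨U, hb', hg'⟩, Z, hne, hz⟩
  choose next Zf hiso hz using key'
  let seq : ℕ → {W : A // BichainCondition W ∧ ¬ GoodDecomp W} :=
    fun n => Nat.rec ⟨X, h, hX⟩ (fun _ t => next t) n
  let obj : ℕ → A := fun n => (seq n).1
  have e : ∀ n, obj n ≅ obj (n+1) ⊞ Zf (seq n) := fun n => (hiso (seq n)).some
  let α : ∀ n, obj n ⟶ obj (n+1) := fun n => (e n).hom ≫ biprod.fst
  let β : ∀ n, obj (n+1) ⟶ obj n := fun n => biprod.inl ≫ (e n).inv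
  obtain ⟨n₀, hn₀⟩ := h obj α β rfl (fun n => epi_comp _ _) (fun n => mono_comp _ _)
  have hβ : IsIso (β n₀) := (hn₀ n₀ le_rfl).2
  have : IsIso (biprod.inl : obj (n₀+1) ⟶ obj (n₀+1) ⊞ Zf (seq n₀)) := by
    have : (biprod.inl : obj (n₀+1) ⟶ obj (n₀+1) ⊞ Zf (seq n₀)) = β n₀ ≫ (e n₀).hom := by
      simp [β]
    rw [this]
    infer_instance
  exact hz (seq n₀) (isZero_of_isIso_inl this)

/-- Atiyah's Krull-Remak-Schmidt theorem: an object of an abelian category satisfying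
the bi-chain condition admits a decomposition into a finite direct sum of indecomposable
objects having local endomorphism rings. -/
theorem krull_remak_schmidt_of_bichain {A : Type u} [Category.{v} A] [Abelian A]
    (X : A) (h : BichainCondition X) :
    ∃ (n : ℕ) (f : Fin n → A),
      Nonempty (X ≅ ⨁ f) ∧ ∀ i, Indecomposable (f i) ∧ IsLocalRing (End (f i)) := by
  obtain ⟨n, f, hne, hprops⟩ := goodDecomp_of_bichain X h
  exact ⟨n, f, hne, fun i => ⟨(hprops i).1, isLocalRing_end (hprops i).1 (hprops i).2⟩⟩
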